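/- arXiv:1905.12542 — 2 statements merged into one kernel-verified Lean document; each statement's English description precedes it below -/
import Mathlib

section
/- Every point of a nonempty rational polyhedral set P ⊆ ℝ^n is a convex combination of finitely many points of P ∩ ℚ^n; that is, there exist rational points q₁, …, q_r ∈ P ∩ ℚ^n and positive reals c₁, …, c_r with Σ c_α = 1 and x = Σ c_α q_α. -/
open Finset

/-- cast a rational vector to a real vector -/
noncomputable def castV {N : ℕ} (v : Fin N → ℚ) : Fin N → ℝ := fun j => (v j : ℝ)

lemma castV_apply {N : ℕ} (v : Fin N → ℚ) (j : Fin N) : castV v j = (v j : ℝ) := rfl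

/-- ℚ-linearly independent rational vectors are ℝ-linearly independent. -/
lemma key_indep {k N : ℕ} (w : Fin k → (Fin N → ℚ)) (h : LinearIndependent ℚ w) :
    LinearIndependent ℝ (fun i => castV (w i)) := by
  -- linear map c ↦ ∑ c i • w i
  let f : (Fin k → ℚ) →ₗ[ℚ] (Fin N → ℚ) := Fintype.linearCombination ℚ w
  have hf : ∀ c, f c = ∑ i, c i • w i := fun c => by
    simp [f, Fintype.linearCombination_apply]
  have hker : LinearMap.ker f = ⊥ := by
    rw [LinearMap.ker_eq_bot']
    intro c hc
    funext i
    exact Fintype.linearIndependent_iff.mp h c (by rw [← hf]; exact hc) i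
  obtain ⟨g, hg⟩ := f.exists_leftInverse_of_injective hker
  -- matrix of g
  set B : Fin N → Fin k → ℚ := fun jl i => g (fun j' => if jl = j' then 1 else 0) i with hB
  have hgB : ∀ c : Fin N → ℚ, g c = fun i => ∑ j, c j * B j i := by
    intro c
    funext i
    rw [LinearMap.pi_apply_eq_sum_univ g c]
    rw [Finset.sum_apply]
    simp [B, smul_eq_mul]
  have hWB : ∀ i i', (∑ j, w i j * B j i') = if i = i' then 1 else 0 := by
    intro i i'
    have h1 : f (fun i' => if i = i' then 1 else 0) = w i := by
      rw [hf]
      rw [Finset.sum_eq_single i]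
      · simp
      · intro b _ hb; simp [Ne.symm hb]
      · simp
    have h2 : g (w i) = fun i' => if i = i' then 1 else 0 := by
      rw [← h1]
      have := congrArg (fun (F : (Fin k → ℚ) →ₗ[ℚ] (Fin k → ℚ)) => F (fun i' => if i = i' then 1 else 0)) hg
      simpa using this
    have := congrFun ((hgB (w i)).symm.trans h2) i'
    simpa using this
  -- now prove real independence
  rw [Fintype.linearIndependent_iff]
  intro c hc i'
  have hcj : ∀ j, ∑ i, c i * (w i j : ℝ) = 0 := by
    intro j
    have := congrFun hc j
    rw [Finset.sum_apply] at this
    simpa [castV] using this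
  have : ∑ j, (∑ i, c i * (w i j : ℝ)) * (B j i' : ℝ) = c i' := by
    simp_rw [Finset.sum_mul]
    rw [Finset.sum_comm]
    have : ∀ i, ∑ j, c i * (w i j : ℝ) * (B j i' : ℝ) = c i * ((if i = i' then 1 else 0 : ℚ) : ℝ) := by
      intro i
      rw [← hWB i i']
      push_cast
      rw [Finset.mul_sum]
      congr 1; funext j; ring
    rw [Finset.sum_congr rfl (fun i _ => this i)]
    rw [Finset.sum_eq_single i']
    · simp
    · intro b _ hb; simp [if_neg hb]
    · simp
  rw [← this]
  rw [Finset.sum_congr rfl (fun j _ => by rw [hcj j, zero_mul])]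
  simp
lemma castV_zero {N : ℕ} : castV (0 : Fin N → ℚ) = 0 := by funext j; simp [castV]

lemma castV_add {N : ℕ} (u v : Fin N → ℚ) : castV (u + v) = castV u + castV v := by
  funext j; simp [castV]

lemma castV_smul {N : ℕ} (q : ℚ) (u : Fin N → ℚ) : castV (q • u) = (q : ℝ) • castV u := by
  funext j; simp [castV, Rat.smul_def]

lemma rat_solution {m n : ℕ} (A : Fin m → Fin n → ℚ) (b : Fin m → ℚ)
    (x : Fin n → ℝ) (hx : ∀ i, ∑ j, (A i j : ℝ) * x j = (b i : ℝ)) :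
    ∃ q : Fin n → ℚ, (∀ i, ∑ j, A i j * q j = b i) ∧
      (x - castV q) ∈ Submodule.span ℝ
        (castV '' {v : Fin n → ℚ | ∀ i, ∑ j, A i j * v j = 0}) := by
  classical
  set f : (Fin n → ℚ) →ₗ[ℚ] (Fin m → ℚ) := (Matrix.of A).mulVecLin with hfdef
  have hf : ∀ v i, f v i = ∑ j, A i j * v j := by
    intro v i; simp [hfdef, Matrix.mulVecLin_apply, Matrix.mulVec, dotProduct]
  set fR : (Fin n → ℝ) →ₗ[ℝ] (Fin m → ℝ) := (Matrix.of (fun i j => (A i j : ℝ))).mulVecLin with hfRdef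
  have hfR : ∀ v i, fR v i = ∑ j, (A i j : ℝ) * v j := by
    intro v i; simp [hfRdef, Matrix.mulVecLin_apply, Matrix.mulVec, dotProduct]
  have hcomm : ∀ v : Fin n → ℚ, fR (castV v) = castV (f v) := by
    intro v; funext i; simp only [hfR, castV, hf]; push_cast; ring
  set K := LinearMap.ker f with hK
  set R := LinearMap.range f with hR
  set k := Module.finrank ℚ K with hk
  set r := Module.finrank ℚ R with hr
  let κ : Module.Basis (Fin k) ℚ K := Module.finBasis ℚ K
  let ρ : Module.Basis (Fin r) ℚ R := Module.finBasis ℚ R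
  set vK : Fin k → (Fin n → ℚ) := fun l => (κ l : Fin n → ℚ) with hvKdef
  set u : Fin r → (Fin m → ℚ) := fun l => (ρ l : Fin m → ℚ) with hudef
  have hvK : LinearIndependent ℚ vK := κ.linearIndependent.map' K.subtype (Submodule.ker_subtype K)
  have hu : LinearIndependent ℚ u := ρ.linearIndependent.map' R.subtype (Submodule.ker_subtype R)
  have hp : ∀ l, ∃ p : Fin n → ℚ, f p = u l := fun l => (ρ l).2
  choose p hp using hp
  set KR := LinearMap.ker fR with hKR0
  set RR := LinearMap.range fR with hRR0
  -- span inclusions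
  have h1 : Submodule.span ℝ (Set.range (fun l => castV (vK l))) ≤ KR := by
    rw [Submodule.span_le]
    rintro _ ⟨l, rfl⟩
    have hmem : vK l ∈ K := (κ l).2
    have : f (vK l) = 0 := hmem
    rw [hKR0, SetLike.mem_coe, LinearMap.mem_ker, hcomm, this, castV_zero]
  have h2 : Submodule.span ℝ (Set.range (fun l => castV (u l))) ≤ RR := by
    rw [Submodule.span_le]
    rintro _ ⟨l, rfl⟩
    exact ⟨castV (p l), by rw [hcomm, hp]⟩
  have hk_span : Module.finrank ℝ (Submodule.span ℝ (Set.range (fun l => castV (vK l)))) = k := by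
    simpa using finrank_span_eq_card (key_indep vK hvK)
  have hr_span : Module.finrank ℝ (Submodule.span ℝ (Set.range (fun l => castV (u l)))) = r := by
    simpa using finrank_span_eq_card (key_indep u hu)
  have hrnQ : r + k = n := by
    simpa using LinearMap.finrank_range_add_finrank_ker f
  have hrnR : Module.finrank ℝ RR + Module.finrank ℝ KR = n := by
    simpa using LinearMap.finrank_range_add_finrank_ker fR
  have hle1 : k ≤ Module.finrank ℝ KR := hk_span ▸ Submodule.finrank_mono h1
  have hle2 : r ≤ Module.finrank ℝ RR := hr_span ▸ Submodule.finrank_mono h2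
  have hKReq : KR = Submodule.span ℝ (Set.range (fun l => castV (vK l))) :=
    (Submodule.eq_of_le_of_finrank_le h1 (by omega)).symm
  have hRReq : RR = Submodule.span ℝ (Set.range (fun l => castV (u l))) :=
    (Submodule.eq_of_le_of_finrank_le h2 (by omega)).symm
  -- b is in the range of f
  have hfx : fR x = castV b := by funext i; rw [hfR]; exact hx i
  have hbR : castV b ∈ RR := ⟨x, hfx⟩
  have hspanu : Submodule.span ℚ (Set.range u) = R := by
    have : Set.range u = R.subtype '' Set.range ρ := by
      rw [← Set.range_comp]; rfl
    rw [this, Submodule.span_image, ρ.span_eq, Submodule.map_top, Submodule.range_subtype]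
  have hbQ : b ∈ Submodule.span ℚ (Set.range u) := by
    by_contra hb
    have hcons : LinearIndependent ℚ (Fin.cons b u) :=
      linearIndependent_fin_cons.mpr ⟨hu, hb⟩
    have hconsR := key_indep (Fin.cons b u : Fin (r+1) → (Fin m → ℚ)) hcons
    have hfam : (fun i => castV ((Fin.cons b u : Fin (r+1) → Fin m → ℚ) i)) = Fin.cons (castV b) (fun l => castV (u l)) := by
      funext i
      induction i using Fin.cases <;> simp
    rw [hfam] at hconsR
    have := (linearIndependent_fin_cons.mp hconsR).2
    rw [hRReq] at hbR
    exact this hbR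
  obtain ⟨s, hs⟩ := Submodule.mem_span_range_iff_exists_fun ℚ |>.mp hbQ
  refine ⟨∑ l, s l • p l, ?_, ?_⟩
  · intro i
    have hfq : f (∑ l, s l • p l) = b := by
      rw [map_sum]
      simp_rw [map_smul, hp]
      exact hs
    rw [← hf, hfq]
  · have hmemKR : x - castV (∑ l, s l • p l) ∈ KR := by
      rw [LinearMap.mem_ker, map_sub, hfx, hcomm]
      have hfq : f (∑ l, s l • p l) = b := by
        rw [map_sum]; simp_rw [map_smul, hp]; exact hs
      rw [hfq, sub_self]
    rw [hKReq] at hmemKR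
    refine Submodule.span_mono ?_ hmemKR
    rintro _ ⟨l, rfl⟩
    refine ⟨vK l, ?_, rfl⟩
    intro i
    have hmem : vK l ∈ K := (κ l).2
    have : f (vK l) = 0 := hmem
    rw [← hf, this]; rfl
lemma sum_cast_eq {n : ℕ} (c : Fin n → ℚ) (v : Fin n → ℚ) :
    ∑ j, (c j : ℝ) * castV v j = ((∑ j, c j * v j : ℚ) : ℝ) := by
  push_cast [castV]; rfl

/-- the ℚ-kernel of the rows indexed by `T` -/
def kerSet {m n : ℕ} (a : Fin m → Fin n → ℚ) (T : Set (Fin m)) : Submodule ℚ (Fin n → ℚ) where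
  carrier := {v | ∀ i ∈ T, ∑ j, a i j * v j = 0}
  add_mem' := by
    intro u v hu hv i hi
    simp only [Pi.add_apply, mul_add, Finset.sum_add_distrib, hu i hi, hv i hi, add_zero]
  zero_mem' := by intro i _; simp
  smul_mem' := by
    intro q v hv i hi
    have h : ∑ j, a i j * (q • v) j = q * ∑ j, a i j * v j := by
      rw [Finset.mul_sum]; congr 1; funext j; simp [smul_eq_mul]; ring
    rw [h, hv i hi, mul_zero]

lemma mem_kerSet {m n : ℕ} {a : Fin m → Fin n → ℚ} {T : Set (Fin m)} {v : Fin n → ℚ} :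
    v ∈ kerSet a T ↔ ∀ i ∈ T, ∑ j, a i j * v j = 0 := Iff.rfl

lemma kerSet_antitone {m n : ℕ} (a : Fin m → Fin n → ℚ) {T T' : Set (Fin m)} (h : T ⊆ T') :
    kerSet a T' ≤ kerSet a T := fun _ hv i hi => hv i (h hi)

lemma hull_translate {m n : ℕ} (a : Fin m → Fin n → ℚ) (b : Fin m → ℚ)
    (w : Fin n → ℚ) (hw : ∀ i, ∑ j, a i j * w j ≤ 0)
    {x : Fin n → ℝ}
    (hx : x ∈ convexHull ℝ ({y | ∀ i, ∑ j, (a i j : ℝ) * y j ≤ (b i : ℝ)} ∩ Set.range castV))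
    {t : ℝ} (ht : 0 ≤ t) :
    x + t • castV w ∈
      convexHull ℝ ({y | ∀ i, ∑ j, (a i j : ℝ) * y j ≤ (b i : ℝ)} ∩ Set.range castV) := by
  set S := {y : Fin n → ℝ | ∀ i, ∑ j, (a i j : ℝ) * y j ≤ (b i : ℝ)} ∩ Set.range castV with hS
  rcases eq_or_lt_of_le ht with h0 | htpos
  · rw [← h0]; simpa using hx
  obtain ⟨ρ, hρ⟩ := exists_rat_gt t
  have hρ0 : (0:ℝ) < (ρ:ℝ) := lt_trans htpos hρ
  have hρQ : (0:ℚ) < ρ := by exact_mod_cast hρ0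
  have key : x + (ρ:ℝ) • castV w ∈ convexHull ℝ S := by
    have himg : (fun z => (ρ:ℝ) • castV w + z) '' S ⊆ S := by
      rintro _ ⟨z, ⟨hz1, q, rfl⟩, rfl⟩
      have hcast : (ρ:ℝ) • castV w + castV q = castV (ρ • w + q) := by
        rw [castV_add, castV_smul]
      show (ρ:ℝ) • castV w + castV q ∈ S
      rw [hcast]
      refine ⟨?_, ⟨ρ • w + q, rfl⟩⟩
      intro i
      rw [sum_cast_eq]
      have h2 : (∑ j, a i j * q j : ℚ) ≤ b i := by
        have h1 : ((∑ j, a i j * q j : ℚ) : ℝ) ≤ (b i : ℝ) := by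
          rw [← sum_cast_eq]; exact hz1 i
        exact_mod_cast h1
      have h3 : (∑ j, a i j * (ρ • w + q) j : ℚ) ≤ b i := by
        have heq : ∑ j, a i j * (ρ • w + q) j = ρ * (∑ j, a i j * w j) + ∑ j, a i j * q j := by
          rw [Finset.mul_sum, ← Finset.sum_add_distrib]
          congr 1; funext j; simp [smul_eq_mul]; ring
        rw [heq]
        nlinarith [hw i]
      exact_mod_cast h3
    have himage := AffineMap.image_convexHull
      ((AffineEquiv.constVAdd ℝ (Fin n → ℝ) ((ρ:ℝ) • castV w)).toAffineMap) S
    have hmem : x + (ρ:ℝ) • castV w ∈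
        (convexHull ℝ) ((fun z => (ρ:ℝ) • castV w + z) '' S) := by
      have : x + (ρ:ℝ) • castV w ∈
          (⇑((AffineEquiv.constVAdd ℝ (Fin n → ℝ) ((ρ:ℝ) • castV w)).toAffineMap)) ''
            ((convexHull ℝ) S) := ⟨x, hx, by simp [add_comm]⟩
      rw [himage] at this
      convert this using 2
      ext z; simp [vadd_eq_add]
    exact convexHull_mono himg hmem
  -- convex combination
  have hb2 : (0:ℝ) ≤ t/(ρ:ℝ) := div_nonneg (le_of_lt htpos) (le_of_lt hρ0)
  have hb1 : (0:ℝ) ≤ 1 - t/(ρ:ℝ) := by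
    rw [sub_nonneg, div_le_one hρ0]; exact le_of_lt hρ
  have hcomb := (convex_convexHull ℝ S) hx key hb1 hb2 (by ring)
  have hexp : (1 - t/(ρ:ℝ)) • x + (t/(ρ:ℝ)) • (x + (ρ:ℝ) • castV w) = x + t • castV w := by
    rw [smul_add, smul_smul, div_mul_cancel₀ _ (ne_of_gt hρ0), sub_smul, one_smul]
    abel
  rw [← hexp]; exact hcomb

lemma step {m n : ℕ} (a : Fin m → Fin n → ℚ) (b : Fin m → ℚ) (x : Fin n → ℝ)
    (hx : ∀ i, ∑ j, (a i j : ℝ) * x j ≤ (b i : ℝ)) (v : Fin n → ℚ)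
    (hv0 : ∀ i, (∑ j, (a i j : ℝ) * x j = (b i : ℝ)) → ∑ j, a i j * v j = 0)
    (hpos : ∃ i, 0 < ∑ j, a i j * v j) :
    ∃ t : ℝ, 0 < t ∧ (∀ i, ∑ j, (a i j : ℝ) * (x + t • castV v) j ≤ (b i : ℝ)) ∧
      (∀ i, (∑ j, (a i j : ℝ) * x j = (b i : ℝ)) →
        ∑ j, (a i j : ℝ) * (x + t • castV v) j = (b i : ℝ)) ∧
      (∃ i, (∑ j, (a i j : ℝ) * (x + t • castV v) j = (b i : ℝ)) ∧ ∑ j, a i j * v j ≠ 0) := by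
  classical
  set σ : Fin m → ℚ := fun i => ∑ j, a i j * v j with hσ
  have hsum : ∀ (t : ℝ) (i), ∑ j, (a i j : ℝ) * (x + t • castV v) j
      = (∑ j, (a i j : ℝ) * x j) + t * (σ i : ℝ) := by
    intro t i
    simp only [Pi.add_apply, Pi.smul_apply, smul_eq_mul, mul_add, Finset.sum_add_distrib]
    congr 1
    rw [hσ]; push_cast [castV]
    rw [Finset.mul_sum]
    congr 1; funext j; ring
  set pos : Finset (Fin m) := Finset.univ.filter (fun i => 0 < σ i) with hposset
  have hne : pos.Nonempty := by
    obtain ⟨i, hi⟩ := hpos; exact ⟨i, by simp [hposset, hσ, hi]⟩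
  set t := pos.inf' hne (fun i => ((b i : ℝ) - ∑ j, (a i j : ℝ) * x j) / (σ i : ℝ)) with htdef
  have hposσ : ∀ i ∈ pos, 0 < σ i := by intro i hi; simpa [hposset] using hi
  have hstrict : ∀ i ∈ pos, ∑ j, (a i j : ℝ) * x j < (b i : ℝ) := by
    intro i hi
    rcases lt_or_eq_of_le (hx i) with h | h
    · exact h
    · exfalso
      have h0 : σ i = 0 := hv0 i h
      have hσi := hposσ i hi
      rw [h0] at hσi; exact lt_irrefl _ hσi
  have ht0 : 0 < t := by
    rw [htdef, Finset.lt_inf'_iff]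
    intro i hi
    have h1 : (0:ℝ) < (σ i : ℝ) := by exact_mod_cast hposσ i hi
    exact div_pos (by linarith [hstrict i hi]) h1
  refine ⟨t, ht0, ?_, ?_, ?_⟩
  · intro i
    rw [hsum]
    by_cases hi : 0 < σ i
    · have hmem : i ∈ pos := by simp [hposset, hi]
      have hle : t ≤ ((b i : ℝ) - ∑ j, (a i j : ℝ) * x j) / (σ i : ℝ) :=
        htdef ▸ Finset.inf'_le _ hmem
      have h1 : (0:ℝ) < (σ i : ℝ) := by exact_mod_cast hi
      rw [le_div_iff₀ h1] at hle
      linarith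
    · have h1 : (σ i : ℝ) ≤ 0 := by exact_mod_cast not_lt.mp hi
      have h2 := hx i
      nlinarith
  · intro i hi
    have h0 : σ i = 0 := hv0 i hi
    rw [hsum, h0]
    push_cast
    rw [mul_zero, add_zero]
    exact hi
  · obtain ⟨i, hi, heq⟩ := Finset.exists_mem_eq_inf' hne
      (fun i => ((b i : ℝ) - ∑ j, (a i j : ℝ) * x j) / (σ i : ℝ))
    refine ⟨i, ?_, ne_of_gt (hposσ i hi)⟩
    rw [hsum]
    have h1 : (0:ℝ) < (σ i : ℝ) := by exact_mod_cast hposσ i hi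
    have h2 : t = ((b i : ℝ) - ∑ j, (a i j : ℝ) * x j) / (σ i : ℝ) := by rw [htdef, heq]
    rw [h2]
    field_simp
    ring
lemma castV_neg {N : ℕ} (v : Fin N → ℚ) : castV (-v) = -castV v := by
  funext j; simp [castV]

lemma subcase1 {m n : ℕ} (a : Fin m → Fin n → ℚ) (b : Fin m → ℚ) (x : Fin n → ℝ)
    (hx : ∀ i, ∑ j, (a i j : ℝ) * x j ≤ (b i : ℝ))
    (hker : ∀ v ∈ kerSet a {i | ∑ j, (a i j:ℝ) * x j = (b i:ℝ)},
      ∀ i, ∑ j, a i j * v j = 0) :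
    x ∈ convexHull ℝ ({y | ∀ i, ∑ j, (a i j : ℝ) * y j ≤ (b i : ℝ)} ∩ Set.range castV) := by
  classical
  set T : Set (Fin m) := {i | ∑ j, (a i j:ℝ) * x j = (b i:ℝ)} with hT
  set C : Fin m → Fin n → ℚ := fun i j => if i ∈ T then a i j else 0 with hC
  set d : Fin m → ℚ := fun i => if i ∈ T then b i else 0 with hd
  have hCx : ∀ i, ∑ j, (C i j : ℝ) * x j = (d i : ℝ) := by
    intro i
    by_cases hi : i ∈ T
    · simp only [hC, hd, if_pos hi]; exact hi
    · simp only [hC, hd, if_neg hi]; simp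
  obtain ⟨q, hq, hspan⟩ := rat_solution C d x hCx
  have hkerC : {v : Fin n → ℚ | ∀ i, ∑ j, C i j * v j = 0}
      = (kerSet a T : Set (Fin n → ℚ)) := by
    ext v
    constructor
    · intro hv i hi
      have := hv i
      simpa [hC, if_pos hi] using this
    · intro hv i
      by_cases hi : i ∈ T
      · simpa [hC, if_pos hi] using hv i hi
      · simp [hC, if_neg hi]
  rw [hkerC] at hspan
  have hann : ∀ u ∈ Submodule.span ℝ (castV '' (kerSet a T : Set (Fin n → ℚ))),
      ∀ i, ∑ j, (a i j : ℝ) * u j = 0 := by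
    have hfR : ∀ (u : Fin n → ℝ) (i),
        (Matrix.of (fun i j => (a i j : ℝ))).mulVecLin u i = ∑ j, (a i j:ℝ) * u j := by
      intro u i; simp [Matrix.mulVecLin_apply, Matrix.mulVec, dotProduct]
    have hle : Submodule.span ℝ (castV '' (kerSet a T : Set (Fin n → ℚ))) ≤
        LinearMap.ker (Matrix.of (fun i j => (a i j : ℝ))).mulVecLin := by
      rw [Submodule.span_le]
      rintro _ ⟨v, hv, rfl⟩
      rw [SetLike.mem_coe, LinearMap.mem_ker]
      funext i
      rw [hfR, sum_cast_eq, hker v hv i]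
      simp
    intro u hu i
    have := hle hu
    rw [LinearMap.mem_ker] at this
    have := congrFun this i
    rw [hfR] at this
    simpa using this
  -- q is a rational point of P
  have h1 : ∀ i, ∑ j, (a i j:ℝ) * (x j - castV q j) = 0 := by
    intro i
    have := hann _ hspan i
    simpa [Pi.sub_apply] using this
  have hqP : ∀ i, ∑ j, (a i j : ℝ) * castV q j ≤ (b i : ℝ) := by
    intro i
    have h2 : ∑ j, (a i j:ℝ) * castV q j
        = (∑ j, (a i j:ℝ) * x j) - ∑ j, (a i j:ℝ) * (x j - castV q j) := by
      rw [← Finset.sum_sub_distrib]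
      congr 1; funext j; ring
    rw [h2, h1 i, sub_zero]
    exact hx i
  set hull := convexHull ℝ
    ({y : Fin n → ℝ | ∀ i, ∑ j, (a i j : ℝ) * y j ≤ (b i : ℝ)} ∩ Set.range castV) with hhull
  have hbase : castV q ∈ hull := subset_convexHull ℝ _ ⟨hqP, q, rfl⟩
  set Z : Submodule ℝ (Fin n → ℝ) :=
    { carrier := {u | ∀ t : ℝ, ∀ y ∈ hull, y + t • u ∈ hull}
      add_mem' := by
        intro u v hu hv t y hy
        have h2 := hv t (y + t • u) (hu t y hy)
        have heq : y + t • (u + v) = y + t • u + t • v := by rw [smul_add]; abel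
        rw [heq]; exact h2
      zero_mem' := by intro t y hy; simpa using hy
      smul_mem' := by
        intro s u hu t y hy
        have h2 := hu (t * s) y hy
        rw [smul_smul]
        exact h2 } with hZ
  have hgen : castV '' (kerSet a T : Set (Fin n → ℚ)) ⊆ Z := by
    rintro _ ⟨v, hv, rfl⟩
    intro t y hy
    rcases le_or_gt 0 t with h | h
    · exact hull_translate a b v (fun i => le_of_eq (hker v hv i)) hy h
    · have hneg := hull_translate a b (-v)
        (fun i => le_of_eq (hker (-v) (neg_mem hv) i)) hy (le_of_lt (neg_pos.mpr h))
      rw [castV_neg, smul_neg, neg_smul, neg_neg] at hneg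
      exact hneg
  have hfinal := (Submodule.span_le.mpr hgen) hspan 1 (castV q) hbase
  simpa using hfinal

lemma main_ind {m n : ℕ} (a : Fin m → Fin n → ℚ) (b : Fin m → ℚ) :
    ∀ (d : ℕ) (x : Fin n → ℝ), (∀ i, ∑ j, (a i j : ℝ) * x j ≤ (b i : ℝ)) →
      Module.finrank ℚ (kerSet a {i | ∑ j, (a i j:ℝ) * x j = (b i:ℝ)}) ≤ d →
      x ∈ convexHull ℝ ({y | ∀ i, ∑ j, (a i j : ℝ) * y j ≤ (b i : ℝ)} ∩ Set.range castV) := by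
  intro d
  induction d with
  | zero =>
    intro x hx hd
    apply subcase1 a b x hx
    intro v hv i
    have hbot : kerSet a {i | ∑ j, (a i j:ℝ) * x j = (b i:ℝ)} = ⊥ :=
      Submodule.finrank_eq_zero.mp (Nat.le_zero.mp hd)
    rw [hbot, Submodule.mem_bot] at hv
    subst hv
    simp
  | succ d ih =>
    intro x hx hd
    set T : Set (Fin m) := {i | ∑ j, (a i j:ℝ) * x j = (b i:ℝ)} with hT
    by_cases hcase : ∀ v ∈ kerSet a T, ∀ i, ∑ j, a i j * v j = 0
    · exact subcase1 a b x hx hcase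
    push_neg at hcase
    obtain ⟨v, hv, i₀, hi₀⟩ := hcase
    have hsneg : ∀ (u : Fin n → ℚ) (i), ∑ j, a i j * (-u) j = -∑ j, a i j * u j := by
      intro u i
      rw [← Finset.sum_neg_distrib]
      congr 1; funext j; simp
    -- a claim: moving along an unbounded-ascent direction reaches the hull
    have HP : ∀ w, w ∈ kerSet a T → (∃ i, 0 < ∑ j, a i j * w j) →
        ∃ t : ℝ, 0 < t ∧ (x + t • castV w) ∈
          convexHull ℝ ({y | ∀ i, ∑ j, (a i j : ℝ) * y j ≤ (b i : ℝ)} ∩ Set.range castV) := by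
      intro w hw hwpos
      obtain ⟨t, ht0, hx', htight, i', hi'eq, hi'ne⟩ :=
        step a b x hx w (fun i hi => hw i hi) hwpos
      refine ⟨t, ht0, ?_⟩
      set T' : Set (Fin m) := {i | ∑ j, (a i j:ℝ) * (x + t • castV w) j = (b i:ℝ)} with hT'
      have hsub : T ⊆ T' := fun i hi => htight i hi
      have hlt : kerSet a T' < kerSet a T := by
        refine lt_of_le_of_ne (kerSet_antitone a hsub) (fun heq => ?_)
        have hmem : w ∈ kerSet a T' := by rw [heq]; exact hw
        exact hi'ne (hmem i' hi'eq)
      have hrank : Module.finrank ℚ (kerSet a T') ≤ d := by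
        have := Submodule.finrank_lt_finrank_of_lt hlt
        omega
      exact ih (x + t • castV w) hx' hrank
    -- get a direction with positive ascent somewhere
    obtain ⟨w, hw, hwpos⟩ : ∃ w, w ∈ kerSet a T ∧ ∃ i, 0 < ∑ j, a i j * w j := by
      rcases (Ne.lt_or_gt hi₀) with h | h
      · exact ⟨-v, neg_mem hv, i₀, by rw [hsneg]; linarith⟩
      · exact ⟨v, hv, i₀, h⟩
    obtain ⟨tp, htp, hxp⟩ := HP w hw hwpos
    by_cases hneg : ∃ i, 0 < ∑ j, a i j * (-w) j
    · -- bounded in both directions: convex combination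
      obtain ⟨tm, htm, hxm⟩ := HP (-w) (neg_mem hw) hneg
      set α := tp / (tp + tm) with hα
      set β := tm / (tp + tm) with hβ
      have hsumpos : (0:ℝ) < tp + tm := by linarith
      have hα0 : 0 ≤ α := by positivity
      have hβ0 : 0 ≤ β := by positivity
      have hαβ : α + β = 1 := by
        rw [hα, hβ, ← add_div, div_self (ne_of_gt hsumpos)]
      have hcomb := (convex_convexHull ℝ _) hxm hxp hα0 hβ0 hαβ
      have hkey : α • (x + tm • castV (-w)) + β • (x + tp • castV w) = x := by
        rw [castV_neg, smul_neg]
        have h1 : α • (x + -(tm • castV w)) + β • (x + tp • castV w)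
            = (α + β) • x + (β * tp - α * tm) • castV w := by
          rw [smul_add, smul_add, add_smul, sub_smul, smul_neg, smul_smul, smul_smul,
            mul_smul, mul_smul]
          abel
        rw [h1, hαβ, one_smul]
        have h2 : β * tp - α * tm = 0 := by
          rw [hα, hβ]; field_simp; ring
        rw [h2, zero_smul, add_zero]
      rw [hkey] at hcomb
      exact hcomb
    · -- -w is a recession direction
      push_neg at hneg
      have hrec : ∀ i, ∑ j, a i j * (-w) j ≤ 0 := hneg
      have := hull_translate a b (-w) hrec hxp (le_of_lt htp)
      have heq : (x + tp • castV w) + tp • castV (-w) = x := by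
        rw [castV_neg, smul_neg]
        abel
      rw [heq] at this
      exact this
/-- Every point of a nonempty rational polyhedral set is a convex combination of finitely
many rational points of the set. -/
theorem stmt_1 (n : ℕ) (P : Set (Fin n → ℝ))
    (hpoly : ∃ (m : ℕ) (a : Fin m → Fin n → ℚ) (b : Fin m → ℚ),
      P = {x | ∀ i, ∑ j, (a i j : ℝ) * x j ≤ (b i : ℝ)}) :
    ∀ x ∈ P, ∃ (r : ℕ) (q : Fin r → Fin n → ℚ) (c : Fin r → ℝ),
      (∀ α, (fun j => (q α j : ℝ)) ∈ P) ∧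
      (∀ α, 0 < c α) ∧ (∑ α, c α = 1) ∧
      x = ∑ α, c α • (fun j => (q α j : ℝ)) := by
  classical
  obtain ⟨m, a, b, rfl⟩ := hpoly
  intro x hx
  have hx' : ∀ i, ∑ j, (a i j : ℝ) * x j ≤ (b i : ℝ) := hx
  have hhull := main_ind a b
    (Module.finrank ℚ (kerSet a {i | ∑ j, (a i j : ℝ) * x j = (b i : ℝ)})) x hx' le_rfl
  rw [_root_.convexHull_eq] at hhull
  obtain ⟨ι, t, wgt, z, hw0, hw1, hzS, hcm⟩ := hhull
  rw [Finset.centerMass_eq_of_sum_1 _ z hw1] at hcm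
  set t' : Finset ι := t.filter (fun i => 0 < wgt i) with ht'
  have hmono : t' ⊆ t := Finset.filter_subset _ _
  have hw1' : ∑ i ∈ t', wgt i = 1 := by
    rw [ht', Finset.sum_filter_of_ne (fun i hi hne => lt_of_le_of_ne (hw0 i hi) (Ne.symm hne))]
    exact hw1
  have hcm' : ∑ i ∈ t', wgt i • z i = x := by
    rw [ht', Finset.sum_filter_of_ne]
    · exact hcm
    · intro i hi hne
      refine lt_of_le_of_ne (hw0 i hi) (fun h0 => hne ?_)
      rw [← h0, zero_smul]
  have hchoice : ∀ i : {i // i ∈ t'}, ∃ qq : Fin n → ℚ, castV qq = z i := by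
    intro i
    obtain ⟨_, qq, hqq⟩ := hzS i (hmono i.2)
    exact ⟨qq, hqq⟩
  choose Q hQ using hchoice
  have hzP : ∀ i : {i // i ∈ t'}, ∀ k, ∑ j, (a k j : ℝ) * z i j ≤ (b k : ℝ) := by
    intro i
    exact (hzS i (hmono i.2)).1
  set e := t'.equivFin with he
  refine ⟨t'.card, fun α => Q (e.symm α), fun α => wgt (e.symm α), ?_, ?_, ?_, ?_⟩
  · intro α
    have h1 := hzP (e.symm α)
    rw [← hQ (e.symm α)] at h1
    exact h1
  · intro α
    have h2 : (e.symm α : ι) ∈ Finset.filter (fun i => 0 < wgt i) t := (e.symm α).2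
    exact (Finset.mem_filter.mp h2).2
  · rw [← hw1', ← Finset.sum_coe_sort t' wgt]
    exact Equiv.sum_comp e.symm (fun i : {i // i ∈ t'} => wgt i)
  · rw [← hcm', ← Finset.sum_coe_sort t' (fun i => wgt i • z i)]
    rw [← Equiv.sum_comp e.symm (fun i : {i // i ∈ t'} => wgt i • z i)]
    refine Finset.sum_congr rfl (fun α _ => ?_)
    rw [← hQ (e.symm α)]
    rfl
end

section
/- Let P ⊆ ℝ^n be a compact convex set (a polytope), let {f_t}_{t∈T} be a family of affine functions on ℝ^n, and set Q = {x ∈ P : f_t(x) ≤ 0 for all t ∈ T}. Suppose there exists x₀ ∈ Q with f_t(x₀) = 0 for all t ∈ T. Then Q equals the convex hull of {x₀} ∪ (Q ∩ ∂P), where ∂P is the relative boundary of P. -/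
/-- If the constraint set Q in a compact convex P contains a point where all the
affine constraints vanish, then Q is the convex hull of that point and Q ∩ ∂P. -/
theorem stmt_7 (n : ℕ) (P : Set (Fin n → ℝ)) (hPc : IsCompact P) (hP : Convex ℝ P)
    (T : Type*) (f : T → ((Fin n → ℝ) →ᵃ[ℝ] ℝ))
    (Q : Set (Fin n → ℝ)) (hQ : Q = {x ∈ P | ∀ t, f t x ≤ 0})
    (x₀ : Fin n → ℝ) (hx₀ : x₀ ∈ Q) (hx₀0 : ∀ t, f t x₀ = 0) :
    Q = convexHull ℝ ({x₀} ∪ (Q ∩ intrinsicFrontier ℝ P)) := by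
  have hQconv : Convex ℝ Q := by
    rw [hQ]
    have : {x ∈ P | ∀ t, f t x ≤ 0} = P ∩ ⋂ t, (f t) ⁻¹' Set.Iic 0 := by
      ext x; simp [Set.mem_iInter]
    rw [this]
    exact hP.inter (convex_iInter fun t => (convex_Iic (0:ℝ)).affine_preimage (f t))
  apply Set.Subset.antisymm
  · intro x hx
    rcases eq_or_ne x x₀ with rfl | hne
    · exact subset_convexHull ℝ _ (Or.inl rfl)
    have hxP : x ∈ P := (hQ ▸ hx).1
    have hxf : ∀ t, f t x ≤ 0 := (hQ ▸ hx).2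
    have hx₀P : x₀ ∈ P := (hQ ▸ hx₀).1
    set L : ℝ →ᵃ[ℝ] (Fin n → ℝ) := AffineMap.lineMap x₀ x with hL
    set S : Set ℝ := L ⁻¹' P with hSdef
    have hS1 : (1:ℝ) ∈ S := by simp [hSdef, hL, AffineMap.lineMap_apply_one, hxP]
    have hSne : S.Nonempty := ⟨1, hS1⟩
    have hLcont : Continuous L := AffineMap.lineMap_continuous
    have hSclosed : IsClosed S := hPc.isClosed.preimage hLcont
    have hSbdd : BddAbove S := by
      obtain ⟨C, hC⟩ := hPc.isBounded.exists_norm_le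
      have hxne : (0:ℝ) < ‖x - x₀‖ := norm_pos_iff.mpr (sub_ne_zero_of_ne hne)
      refine ⟨(C + ‖x₀‖) / ‖x - x₀‖, fun s hs => ?_⟩
      have hnorm : ‖L s‖ ≤ C := hC _ hs
      have : ‖s • (x - x₀)‖ ≤ C + ‖x₀‖ := by
        have : L s = x₀ + s • (x - x₀) := by
          simp [hL, AffineMap.lineMap_apply_module]; module
        calc ‖s • (x - x₀)‖ = ‖L s - x₀‖ := by rw [this]; ring_nf
          _ ≤ ‖L s‖ + ‖x₀‖ := norm_sub_le _ _
          _ ≤ C + ‖x₀‖ := by linarith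
      rw [norm_smul, Real.norm_eq_abs] at this
      calc s ≤ |s| := le_abs_self s
        _ ≤ (C + ‖x₀‖) / ‖x - x₀‖ := by
            rw [le_div_iff₀ hxne]; linarith [this]
    set b : ℝ := sSup S with hb
    have hbmem : b ∈ S := hSclosed.csSup_mem hSne hSbdd
    have hb1 : 1 ≤ b := le_csSup hSbdd hS1
    have hb0 : 0 < b := lt_of_lt_of_le one_pos hb1
    set y : Fin n → ℝ := L b with hy
    have hyP : y ∈ P := hbmem
    have hyQ : y ∈ Q := by
      rw [hQ]
      refine ⟨hyP, fun t => ?_⟩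
      have h1 : f t y = AffineMap.lineMap (f t x₀) (f t x) b := by
        rw [hy, hL, AffineMap.apply_lineMap]
      have h2 : f t y = b * f t x := by
        rw [h1, AffineMap.lineMap_apply_module, hx₀0 t]; simp [smul_eq_mul]
      rw [h2]
      exact mul_nonpos_of_nonneg_of_nonpos hb0.le (hxf t)
    -- y is in the intrinsic frontier of P
    have hymem : y ∈ affineSpan ℝ P :=
      AffineMap.lineMap_mem b (subset_affineSpan ℝ P hx₀P) (subset_affineSpan ℝ P hxP)
    have hyF : y ∈ intrinsicFrontier ℝ P := by
      refine ⟨⟨y, hymem⟩, ?_, rfl⟩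
      rw [frontier, Set.mem_diff]
      constructor
      · exact subset_closure hyP
      · intro hint
        -- continuous path into the span
        set γ : ℝ → affineSpan ℝ P := fun s =>
          ⟨L s, AffineMap.lineMap_mem s (subset_affineSpan ℝ P hx₀P) (subset_affineSpan ℝ P hxP)⟩
          with hγ
        have hγcont : Continuous γ := Continuous.subtype_mk hLcont _
        have hopen : IsOpen (γ ⁻¹' interior ((↑) ⁻¹' P : Set (affineSpan ℝ P))) :=
          isOpen_interior.preimage hγcont
        have hbin : b ∈ γ ⁻¹' interior ((↑) ⁻¹' P : Set (affineSpan ℝ P)) := hint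
        obtain ⟨ε, hε, hball⟩ := Metric.isOpen_iff.1 hopen b hbin
        have h2 : b + ε/2 ∈ γ ⁻¹' interior ((↑) ⁻¹' P : Set (affineSpan ℝ P)) := by
          apply hball
          simp only [Metric.mem_ball, Real.dist_eq]
          rw [abs_of_pos (by linarith)]; linarith
        have h3 : γ (b + ε/2) ∈ ((↑) ⁻¹' P : Set (affineSpan ℝ P)) := interior_subset h2
        have h4 : b + ε/2 ∈ S := h3
        have := le_csSup hSbdd h4
        linarith
    -- x is a convex combination of x₀ and y
    have hbne : b ≠ 0 := hb0.ne'
    have hxcomb : x = (1 - 1/b) • x₀ + (1/b) • y := by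
      have hyeq : y = (1 - b) • x₀ + b • x := by
        simp [hy, hL, AffineMap.lineMap_apply_module]
      rw [hyeq]
      match_scalars <;> field_simp <;> ring
    have hm₀ : x₀ ∈ convexHull ℝ ({x₀} ∪ (Q ∩ intrinsicFrontier ℝ P)) :=
      subset_convexHull ℝ _ (Set.mem_union_left _ rfl)
    have hmy : y ∈ convexHull ℝ ({x₀} ∪ (Q ∩ intrinsicFrontier ℝ P)) :=
      subset_convexHull ℝ _ (Set.mem_union_right _ ⟨hyQ, hyF⟩)
    have h01 : (0:ℝ) ≤ 1 - 1/b := by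
      rw [sub_nonneg, div_le_one hb0]; exact hb1
    have h02 : (0:ℝ) ≤ 1/b := by positivity
    rw [hxcomb]
    exact (convex_convexHull ℝ _) hm₀ hmy h01 h02 (by ring)
  · apply convexHull_min _ hQconv
    rintro z (rfl | hz)
    · exact hx₀
    · exact hz.1
end
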